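/- arXiv:1804.00939 — 2 statements merged into one kernel-verified Lean document; each statement's English description precedes it below -/
import Mathlib

section
/- Let R be a local ring and I an ideal containing a regular element. If I ⊗_R Hom_R(I,R) is torsionfree, then the canonical evaluation map I ⊗_R Hom_R(I,R) → tr_R(I) is bijective, and consequently ν_R(I)·ν_R(I*) = ν_R(tr_R(I)). -/
open CategoryTheory TensorProduct IsLocalRing

noncomputable section

/-- The minimal number of generators of an `R`-module `M`. -/
def minGen (R M : Type) [CommRing R] [AddCommGroup M] [Module R M] : ℕ :=
  sInf {n | ∃ s : Finset M, s.card = n ∧ Submodule.span R (s : Set M) = ⊤}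

/-- `M` has (generic) rank `r`: at every associated prime of `R`, the localization
of `M` is free of rank `r`. -/
def HasRank (R M : Type) [CommRing R] [AddCommGroup M] [Module R M] (r : ℕ) : Prop :=
  ∀ (p : Ideal R) (hp : p ∈ associatedPrimes R R),
    letI : p.IsPrime := hp.1
    Module.Free (Localization p.primeCompl) (LocalizedModule p.primeCompl M) ∧
      Module.finrank (Localization p.primeCompl) (LocalizedModule p.primeCompl M) = r

/-- The length of a module, as the Krull dimension of its submodule lattice. -/
def mlength (R M : Type) [CommRing R] [AddCommGroup M] [Module R M] : WithBot ℕ∞ :=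
  Order.krullDim (Submodule R M)

/-- The Hilbert–Samuel multiplicity of a one-dimensional local ring `R` is `e`:
the difference `λ(R/m^{n+1}) - λ(R/m^n)` is eventually the constant `e`. -/
def IsMultiplicity (R : Type) [CommRing R] [IsLocalRing R] (e : ℕ) : Prop :=
  ∃ N : ℕ, ∀ n ≥ N,
    mlength R (R ⧸ (maximalIdeal R ^ (n + 1))) =
      mlength R (R ⧸ (maximalIdeal R ^ n)) + ((e : ℕ∞) : WithBot ℕ∞)

/-- `Ext^n_R(M, N)`. -/
abbrev extKGroup (R M N : Type) [CommRing R] [AddCommGroup M] [Module R M]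
    [AddCommGroup N] [Module R N] (n : ℕ) : ModuleCat R :=
  ((Ext R (ModuleCat R) n).obj (Opposite.op (ModuleCat.of R M))).obj (ModuleCat.of R N)

/-- The canonical evaluation map `M ⊗_R M^* → R`. -/
def evalMap (R M : Type) [CommRing R] [AddCommGroup M] [Module R M] :
    M ⊗[R] (M →ₗ[R] R) →ₗ[R] R :=
  TensorProduct.lift LinearMap.applyₗ

/-- The trace ideal of `M`: the image of the evaluation map `M ⊗_R M^* → R`. -/
def traceIdeal (R M : Type) [CommRing R] [AddCommGroup M] [Module R M] : Ideal R :=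
  LinearMap.range (evalMap R M)

/-- A (Noetherian) local ring is Gorenstein of dimension one: it has Krull dimension one
and there is a regular element `x` in the maximal ideal (= the nonunits) such that
`R/(x)` is self-injective. -/
def IsGorensteinLocalOfDimOne (R : Type) [CommRing R] : Prop :=
  IsNoetherianRing R ∧ IsLocalRing R ∧ ringKrullDim R = 1 ∧
    ∃ x ∈ nonunits R, x ∈ nonZeroDivisors R ∧
      Module.Injective (R ⧸ Ideal.span {x}) (R ⧸ Ideal.span {x})

/-- A (Noetherian) local ring of dimension at most one is Gorenstein. -/
def IsGorensteinLocalOfDimLEOne (A : Type) [CommRing A] : Prop :=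
  IsNoetherianRing A ∧ IsLocalRing A ∧
    (Module.Injective A A ∨
      (ringKrullDim A = 1 ∧ ∃ x ∈ nonunits A, x ∈ nonZeroDivisors A ∧
        Module.Injective (A ⧸ Ideal.span {x}) (A ⧸ Ideal.span {x})))

/-- The multiplier set `{α ∈ Q | αA ⊆ A}` of a subset `A` of a ring `Q`. -/
def multEnd {Q : Type} [CommRing Q] (A : Set Q) : Set Q :=
  {α | ∀ a ∈ A, α * a ∈ A}

/-- The image of an ideal `I` in the total quotient ring. -/
def idealImage (R : Type) [CommRing R] (I : Ideal R) : Set (FractionRing R) :=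
  algebraMap R (FractionRing R) '' (I : Set R)

/-- `End_R(I) = {α ∈ Q(R) | α I ⊆ I}` as a submodule of the total quotient ring. -/
def endSubmodule (R : Type) [CommRing R] (I : Ideal R) : Submodule R (FractionRing R) where
  carrier := multEnd (idealImage R I)
  add_mem' := by
    intro a b ha hb x hx
    rw [add_mul]
    obtain ⟨ya, hya, ea⟩ := ha x hx
    obtain ⟨yb, hyb, eb⟩ := hb x hx
    exact ⟨ya + yb, add_mem hya hyb, by rw [map_add, ea, eb]⟩
  zero_mem' := by
    intro x hx
    exact ⟨0, zero_mem _, by rw [map_zero, zero_mul]⟩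
  smul_mem' := by
    intro c a ha x hx
    obtain ⟨y, hy, ey⟩ := ha x hx
    refine ⟨c • y, Submodule.smul_mem _ _ hy, ?_⟩
    rw [Algebra.smul_def, Algebra.smul_def, map_mul, ey, mul_assoc, Algebra.algebraMap_self_apply]


section AuxLemmas

variable {R M N : Type} [CommRing R] [AddCommGroup M] [Module R M]
  [AddCommGroup N] [Module R N]

lemma minGen_exists_of_equiv (e : M ≃ₗ[R] N) {n : ℕ}
    (h : ∃ s : Finset M, s.card = n ∧ Submodule.span R (s : Set M) = ⊤) :
    ∃ s : Finset N, s.card = n ∧ Submodule.span R (s : Set N) = ⊤ := by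
  classical
  obtain ⟨s, hc, hs⟩ := h
  refine ⟨s.image e, by rw [Finset.card_image_of_injective s e.injective, hc], ?_⟩
  rw [Finset.coe_image, ← LinearEquiv.coe_coe, ← Submodule.map_span, hs, Submodule.map_top]
  exact LinearEquiv.range e

lemma minGen_congr (e : M ≃ₗ[R] N) : minGen R M = minGen R N := by
  unfold minGen
  congr 1
  ext n
  exact ⟨fun h => minGen_exists_of_equiv e h, fun h => minGen_exists_of_equiv e.symm h⟩

lemma finite_dual [IsNoetherianRing R] [Module.Finite R M] :
    Module.Finite R (M →ₗ[R] R) := by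
  obtain ⟨n, π, hπ⟩ := Module.Finite.exists_fin' R M
  haveI : IsNoetherian R ((Fin n → R) →ₗ[R] R) :=
    isNoetherian_of_linearEquiv (LinearEquiv.piRing R R (Fin n) R).symm
  refine Module.Finite.of_injective (LinearMap.lcomp R R π) fun a b hab => ?_
  ext m
  obtain ⟨v, rfl⟩ := hπ m
  simpa using LinearMap.congr_fun hab v

open IsLocalRing TensorProduct in
lemma minGen_eq_finrank [IsLocalRing R] [Module.Finite R M] :
    minGen R M = Module.finrank (ResidueField R) (ResidueField R ⊗[R] M) := by
  classical
  set k := ResidueField R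
  have hsurj : Function.Surjective (TensorProduct.mk R k M 1) :=
    TensorProduct.mk_surjective R M k Ideal.Quotient.mk_surjective
  have hlow : ∀ n ∈ {n | ∃ s : Finset M, s.card = n ∧ Submodule.span R (s : Set M) = ⊤},
      Module.finrank k (k ⊗[R] M) ≤ n := by
    rintro n ⟨s, rfl, hs⟩
    have h2 : Submodule.span R ((TensorProduct.mk R k M 1) '' (s : Set M)) = ⊤ := by
      rw [← Submodule.map_span, hs, Submodule.map_top, LinearMap.range_eq_top.mpr hsurj]
    have h1 : Submodule.span k ((TensorProduct.mk R k M 1) '' (s : Set M)) = ⊤ := by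
      rw [← Submodule.restrictScalars_eq_top_iff (S := R), eq_top_iff, ← h2]
      exact Submodule.span_le_restrictScalars R k _
    calc Module.finrank k (k ⊗[R] M)
        = Set.finrank k (((s.image (TensorProduct.mk R k M 1)) : Finset (k ⊗[R] M)) : Set (k ⊗[R] M)) := by
          rw [Set.finrank, Finset.coe_image, h1, finrank_top]
      _ ≤ (s.image (TensorProduct.mk R k M 1)).card := finrank_span_finset_le_card _
      _ ≤ s.card := Finset.card_image_le
  let b := Module.finBasis k (k ⊗[R] M)
  choose f hf using fun i => hsurj (b i)
  have hspan : Submodule.span R (Set.range f) = ⊤ :=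
    IsLocalRing.span_eq_top_of_tmul_eq_basis (R := R) f b hf
  let s : Finset M := Finset.image f Finset.univ
  have hscard : s.card ≤ Module.finrank k (k ⊗[R] M) := by
    simpa [s] using (Finset.card_image_le (s := Finset.univ) (f := f))
  have hmem : s.card ∈ {n | ∃ s : Finset M, s.card = n ∧ Submodule.span R (s : Set M) = ⊤} :=
    ⟨s, rfl, by rw [Finset.coe_image, Finset.coe_univ, Set.image_univ, hspan]⟩
  refine le_antisymm (le_trans (Nat.sInf_le hmem) hscard) (le_csInf ⟨_, hmem⟩ hlow)

open IsLocalRing TensorProduct in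
lemma minGen_tensorProduct [IsLocalRing R] [Module.Finite R M] [Module.Finite R N] :
    minGen R (M ⊗[R] N) = minGen R M * minGen R N := by
  rw [minGen_eq_finrank, minGen_eq_finrank, minGen_eq_finrank,
    LinearEquiv.finrank_eq
      (TensorProduct.AlgebraTensorModule.distribBaseChange R (ResidueField R) M N),
    Module.finrank_tensorProduct]

end AuxLemmas

theorem stmt_6 (R : Type) [CommRing R] [IsLocalRing R] [IsNoetherianRing R]
    (I : Ideal R) (hreg : ∃ x ∈ I, x ∈ nonZeroDivisors R)
    (htf : Submodule.torsion R ((↥I) ⊗[R] (↥I →ₗ[R] R)) = ⊥) :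
    Function.Bijective (LinearMap.rangeRestrict (evalMap R ↥I)) ∧
      minGen R ↥I * minGen R (↥I →ₗ[R] R) = minGen R ↥(traceIdeal R ↥I) := by
  classical
  obtain ⟨x, hxI, hxreg⟩ := hreg
  haveI : Module.Finite R ↥I := Module.Finite.iff_fg.mpr (IsNoetherian.noetherian I)
  haveI : Module.Finite R (↥I →ₗ[R] R) := finite_dual
  set σ : (↥I) ⊗[R] (↥I →ₗ[R] R) →ₗ[R] (↥I →ₗ[R] R) :=
    TensorProduct.lift ((LinearMap.lsmul R (↥I →ₗ[R] R)).comp I.subtype) with hσdef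
  have claim1 : ∀ t : (↥I) ⊗[R] (↥I →ₗ[R] R), (⟨x, hxI⟩ : ↥I) ⊗ₜ[R] (σ t) = x • t := by
    intro t
    induction t using TensorProduct.induction_on with
    | zero => simp
    | tmul a f =>
      simp only [hσdef, TensorProduct.lift.tmul, LinearMap.comp_apply,
        Submodule.coe_subtype, LinearMap.lsmul_apply]
      rw [TensorProduct.tmul_smul, TensorProduct.smul_tmul', TensorProduct.smul_tmul']
      congr 1
      ext
      simp [mul_comm]
    | add u v hu hv => rw [map_add, TensorProduct.tmul_add, hu, hv, smul_add]
  have claim2 : ∀ (t : (↥I) ⊗[R] (↥I →ₗ[R] R)) (y : ↥I),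
      σ t y = (y : R) * evalMap R ↥I t := by
    intro t
    induction t using TensorProduct.induction_on with
    | zero => simp
    | tmul a f =>
      intro y
      simp only [hσdef, TensorProduct.lift.tmul, LinearMap.comp_apply,
        Submodule.coe_subtype, LinearMap.lsmul_apply, LinearMap.smul_apply,
        evalMap, smul_eq_mul]
      rw [show (↑a : R) * f y = f ((↑a : R) • y) from (map_smul f _ _).symm,
        show (↑y : R) * (LinearMap.applyₗ a) f = f ((↑y : R) • a) from (map_smul f _ _).symm]
      congr 1
      ext
      simp [mul_comm]
    | add u v hu hv =>
      intro y
      rw [map_add, map_add, LinearMap.add_apply, hu, hv, mul_add]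
  have hker : ∀ t : (↥I) ⊗[R] (↥I →ₗ[R] R), evalMap R ↥I t = 0 → t = 0 := by
    intro t ht
    have hσt : σ t = 0 := by
      ext y
      rw [claim2, ht, mul_zero, LinearMap.zero_apply]
    have hxt : x • t = 0 := by
      rw [← claim1, hσt, TensorProduct.tmul_zero]
    have : t ∈ Submodule.torsion R ((↥I) ⊗[R] (↥I →ₗ[R] R)) :=
      ⟨⟨x, hxreg⟩, by rwa [Submonoid.smul_def]⟩
    rwa [htf, Submodule.mem_bot] at this
  have hbij : Function.Bijective (LinearMap.rangeRestrict (evalMap R ↥I)) := by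
    refine ⟨?_, LinearMap.surjective_rangeRestrict _⟩
    rw [← LinearMap.ker_eq_bot, LinearMap.ker_rangeRestrict]
    ext t
    simp only [LinearMap.mem_ker, Submodule.mem_bot]
    exact ⟨hker t, fun h => by rw [h, map_zero]⟩
  refine ⟨hbij, ?_⟩
  let e : ((↥I) ⊗[R] (↥I →ₗ[R] R)) ≃ₗ[R] ↥(traceIdeal R ↥I) :=
    LinearEquiv.ofBijective _ hbij
  rw [← minGen_congr e, minGen_tensorProduct]
end
end

section
/- Let S be a Noetherian ring and I, J ideals each containing a regular element. If I and J are linked via a regular sequence x (i.e., J = ((x):I) and I = ((x):J)), then End_S(I) = End_S(J) as subrings of the total quotient ring of S (or of the integral closure of S). -/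
open CategoryTheory TensorProduct IsLocalRing

noncomputable section

open RingTheory.Sequence Pointwise

section aux
variable {S : Type} [CommRing S]

/-- Key one-sided inclusion: if `J = (x):I` with `x` a weakly regular sequence
contained in `I`, and both ideals contain regular elements, then `End(I) ⊆ End(J)`. -/
lemma key_incl {I J : Ideal S}
    (hI : ∃ x ∈ I, x ∈ nonZeroDivisors S) (hJ : ∃ x ∈ J, x ∈ nonZeroDivisors S)
    (xs : List S) (hxs : IsWeaklyRegular S xs)
    (hmemI : ∀ x ∈ xs, x ∈ I)
    (h1 : J = (Ideal.ofList xs).colon I) :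
    multEnd (idealImage S I) ⊆ multEnd (idealImage S J) := by
  classical
  set φ := algebraMap S (FractionRing S) with hφ
  have hinj : Function.Injective φ := IsFractionRing.injective S (FractionRing S)
  intro α hα
  intro y hy
  obtain ⟨j, hj, rfl⟩ := hy
  match xs with
  | [] =>
      -- then J = (0 : I) = annihilator, so S is trivial
      obtain ⟨a, haI, ha⟩ := hI
      obtain ⟨b, hbJ, hb⟩ := hJ
      have hb0 : b * a = 0 := by
        have := h1 ▸ hbJ
        have h := (Submodule.mem_colon.mp this) a haI
        simpa [Ideal.ofList_nil, smul_eq_mul] using h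
      have hb' : b = 0 := ha.2 b hb0
      have h10 : (1 : S) = 0 := hb.2 1 (by rw [hb', mul_zero])
      have : Subsingleton S := subsingleton_of_zero_eq_one h10.symm
      exact ⟨0, J.zero_mem, by
        have : Subsingleton (FractionRing S) :=
          Module.subsingleton S (FractionRing S)
        exact Subsingleton.elim _ _⟩
  | x₁ :: rest =>
      have hx₁I : x₁ ∈ I := hmemI x₁ (by simp)
      have hx₁reg : x₁ ∈ nonZeroDivisors S := by
        have h0 : IsSMulRegular S x₁ :=
          ((RingTheory.Sequence.isWeaklyRegular_cons_iff S x₁ rest).mp hxs).1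
        rw [mem_nonZeroDivisors_iff_right]
        intro z hz
        have : x₁ • z = x₁ • (0 : S) := by
          simp [smul_eq_mul, mul_comm x₁ z, hz]
        exact h0 this
      have hunit : IsUnit (φ x₁) :=
        IsLocalization.map_units (FractionRing S) (⟨x₁, hx₁reg⟩ : nonZeroDivisors S)
      -- b with φ b = α * φ x₁
      obtain ⟨b, hbI, hbEq⟩ := hα (φ x₁) ⟨x₁, hx₁I, rfl⟩
      -- w := j * b ∈ (x)
      have hjc : ∀ c ∈ I, j * c ∈ Ideal.ofList (x₁ :: rest) := by
        intro c hc
        have := h1 ▸ hj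
        simpa [smul_eq_mul] using (Submodule.mem_colon.mp this) c hc
      have hw : j * b ∈ Ideal.ofList (x₁ :: rest) := hjc b hbI
      -- show w ∈ span {x₁}
      have hwspan : j * b ∈ Ideal.span {x₁} := by
        match rest with
        | [] =>
            simpa [Ideal.ofList_singleton] using hw
        | x₂ :: rest₂ =>
            have hx₂I : x₂ ∈ I := hmemI x₂ (by simp)
            obtain ⟨u, huI, huEq⟩ := hα (φ x₂) ⟨x₂, hx₂I, rfl⟩
            have hkey : x₂ * (j * b) = x₁ * (j * u) := by
              apply hinj
              rw [map_mul, map_mul, map_mul, map_mul, hbEq, huEq]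
              ring
            -- x₂ regular mod (x₁)
            have h2reg : IsSMulRegular (QuotSMulTop x₁ S) x₂ := by
              have := ((RingTheory.Sequence.isWeaklyRegular_cons_iff S x₁
                (x₂ :: rest₂)).mp hxs).2
              exact ((RingTheory.Sequence.isWeaklyRegular_cons_iff _ x₂ rest₂).mp this).1
            have hspan : (x₁ • ⊤ : Submodule S S) = Ideal.span {x₁} := by
              rw [← Submodule.ideal_span_singleton_smul, smul_eq_mul, Ideal.mul_top]
            have hmk : (Submodule.Quotient.mk (j * b) : QuotSMulTop x₁ S) = 0 := by
              have hx₂mem : x₂ • (j * b) ∈ (x₁ • ⊤ : Submodule S S) := by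
                rw [hspan, smul_eq_mul, hkey]
                exact Ideal.mul_mem_right _ _ (Ideal.mem_span_singleton_self x₁)
              have : x₂ • (Submodule.Quotient.mk (j * b) : QuotSMulTop x₁ S)
                  = x₂ • (0 : QuotSMulTop x₁ S) := by
                rw [smul_zero, ← Submodule.Quotient.mk_smul,
                  Submodule.Quotient.mk_eq_zero]
                exact hx₂mem
              exact h2reg this
            rw [← hspan]
            exact (Submodule.Quotient.mk_eq_zero _).mp hmk
      obtain ⟨t, ht⟩ := Ideal.mem_span_singleton'.mp hwspan
      -- φ t = α * φ j
      have htEq : φ t = α * φ j := by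
        have h1' : φ x₁ * φ t = φ x₁ * (α * φ j) := by
          rw [← map_mul, mul_comm x₁ t, ht, map_mul, hbEq]
          ring
        exact hunit.mul_left_cancel h1'
      refine ⟨t, SetLike.mem_coe.mpr ?_, htEq⟩
      rw [h1, Submodule.mem_colon]
      intro i hiI
      obtain ⟨c, hcI, hcEq⟩ := hα (φ i) ⟨i, hiI, rfl⟩
      have : t * i = j * c := by
        apply hinj
        rw [map_mul, map_mul, htEq, hcEq]
        ring
      rw [smul_eq_mul, this]
      exact hjc c hcI

end aux


theorem stmt_16 (S : Type) [CommRing S] [IsNoetherianRing S]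
    (I J : Ideal S) (hI : ∃ x ∈ I, x ∈ nonZeroDivisors S)
    (hJ : ∃ x ∈ J, x ∈ nonZeroDivisors S)
    (xs : List S) (hxs : RingTheory.Sequence.IsRegular S xs)
    (hmem : ∀ x ∈ xs, x ∈ I ⊓ J)
    (h1 : J = (Ideal.ofList xs).colon I) (h2 : I = (Ideal.ofList xs).colon J) :
    multEnd (idealImage S I) = multEnd (idealImage S J) := by
  have hmemI : ∀ x ∈ xs, x ∈ I := fun x hx => (Submodule.mem_inf.mp (hmem x hx)).1
  have hmemJ : ∀ x ∈ xs, x ∈ J := fun x hx => (Submodule.mem_inf.mp (hmem x hx)).2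
  exact Set.Subset.antisymm
    (key_incl hI hJ xs hxs.toIsWeaklyRegular hmemI h1)
    (key_incl hJ hI xs hxs.toIsWeaklyRegular hmemJ h2)
end
end
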